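/- Let κ < 0, τ ≠ 0 and H > 0 with 4H² + κ > 0. For x ∈ (−arctanh(√(−κ)/(2H)), 0), define ρ(x) = √(1 + (4H²/κ)tanh²x)/√(1 − (4τ²/κ)tanh²x) and y(x) = arctan((τ/H)ρ(x)) − (H/τ)·(√(4τ²−κ)/√(4H²+κ))·arctan((√(4τ²−κ)/√(4H²+κ))ρ(x)). Then y'(x) = H tanh x · √(1 − (4τ²/κ)tanh²x) / (τ √(1 + (4H²/κ)tanh²x)). -/

import Mathlib

lemma tanh_sq_lt_one (x : ℝ) : Real.tanh x ^ 2 < 1 := by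
  rw [Real.tanh_eq_sinh_div_cosh, div_pow]
  rw [div_lt_one (by positivity)]
  nlinarith [Real.cosh_sq x]

lemma tanh_hasDerivAt (x : ℝ) : HasDerivAt Real.tanh (1 - Real.tanh x ^ 2) x := by
  have h := (Real.hasDerivAt_sinh x).div (Real.hasDerivAt_cosh x) (Real.cosh_pos x).ne'
  have hfun : Real.tanh = fun y => Real.sinh y / Real.cosh y := by
    funext y; exact Real.tanh_eq_sinh_div_cosh y
  rw [hfun]
  convert h using 1
  case e'_4 => rfl
  case e'_5 => rfl
  case e'_8 => rfl
  simp only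
  have hc := (Real.cosh_pos x).ne'
  field_simp

lemma tanh_strictMono : StrictMono Real.tanh := by
  apply strictMono_of_deriv_pos
  intro x
  rw [(tanh_hasDerivAt x).deriv]
  nlinarith [tanh_sq_lt_one x]

lemma tanh_artanh {s : ℝ} (h0 : -1 < s) (h1 : s < 1) :
    Real.tanh ((1 / 2) * Real.log ((1 + s) / (1 - s))) = s := by
  set u := (1 / 2 : ℝ) * Real.log ((1 + s) / (1 - s)) with hu
  have hA : (0:ℝ) < (1 + s) / (1 - s) := by
    apply div_pos <;> linarith
  have hE : Real.exp u ^ 2 = (1 + s) / (1 - s) := by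
    rw [sq, ← Real.exp_add, hu]
    have h2 : (1/2:ℝ) * Real.log ((1 + s) / (1 - s)) + (1/2) * Real.log ((1 + s) / (1 - s))
        = Real.log ((1 + s) / (1 - s)) := by ring
    rw [h2, Real.exp_log hA]
  have hEpos := Real.exp_pos u
  have h1s : (0 : ℝ) < 1 - s := by linarith
  have hE2 : Real.exp u ^ 2 * (1 - s) = 1 + s := by
    rw [hE]; field_simp
  rw [Real.tanh_eq_sinh_div_cosh, Real.sinh_eq, Real.cosh_eq, Real.exp_neg]
  rw [div_eq_iff (by positivity)]
  have hEne := hEpos.ne'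
  field_simp
  linear_combination hE2

/-- The inverse hyperbolic tangent. -/
noncomputable def artanh (x : ℝ) : ℝ := (1 / 2) * Real.log ((1 + x) / (1 - x))

set_option maxHeartbeats 1000000 in
/-- Explicit profile of the CMC `H` sphere in `Sl(2,ℝ)` with `4H² + κ > 0`:
its derivative on the interval `(−artanh(√(−κ)/(2H)), 0)`. -/
theorem profile_sphere_sl2 (κ τ H : ℝ) (hκ : κ < 0) (hτ : τ ≠ 0) (hH : 0 < H)
    (hHκ : 0 < 4 * H ^ 2 + κ)
    (ρ y : ℝ → ℝ)
    (hρ : ∀ x, ρ x = Real.sqrt (1 + (4 * H ^ 2 / κ) * Real.tanh x ^ 2) /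
      Real.sqrt (1 - (4 * τ ^ 2 / κ) * Real.tanh x ^ 2))
    (hy : ∀ x, y x = Real.arctan ((τ / H) * ρ x) -
      (H / τ) * (Real.sqrt (4 * τ ^ 2 - κ) / Real.sqrt (4 * H ^ 2 + κ)) *
        Real.arctan ((Real.sqrt (4 * τ ^ 2 - κ) / Real.sqrt (4 * H ^ 2 + κ)) * ρ x)) :
    ∀ x ∈ Set.Ioo (-(artanh (Real.sqrt (-κ) / (2 * H)))) (0 : ℝ),
      HasDerivAt y
        (H * Real.tanh x * Real.sqrt (1 - (4 * τ ^ 2 / κ) * Real.tanh x ^ 2) /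
          (τ * Real.sqrt (1 + (4 * H ^ 2 / κ) * Real.tanh x ^ 2))) x := by
  intro x hx
  obtain ⟨hx1, hx2⟩ := hx
  have hκne : κ ≠ 0 := ne_of_lt hκ
  have hHne : H ≠ 0 := ne_of_gt hH
  have hτ2 : 0 < τ ^ 2 := lt_of_le_of_ne (sq_nonneg τ) (Ne.symm (pow_ne_zero 2 hτ))
  have hskappa : Real.sqrt (-κ) ^ 2 = -κ := Real.sq_sqrt (by linarith)
  -- t bounds
  have ht1 : Real.tanh x < 0 := by
    have h := tanh_strictMono hx2
    simpa [Real.tanh_zero] using h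
  have hs1 : Real.sqrt (-κ) / (2 * H) < 1 := by
    rw [div_lt_one (by positivity)]
    nlinarith [Real.sqrt_nonneg (-κ)]
  have hart : Real.tanh (artanh (Real.sqrt (-κ) / (2 * H))) = Real.sqrt (-κ) / (2 * H) := by
    unfold artanh
    refine tanh_artanh ?_ hs1
    have := div_nonneg (Real.sqrt_nonneg (-κ)) (by positivity : (0:ℝ) ≤ 2 * H)
    linarith
  have ht2 : -(Real.sqrt (-κ) / (2 * H)) < Real.tanh x := by
    have h := tanh_strictMono hx1
    rwa [Real.tanh_neg, hart] at h
  have ht4 : 4 * H ^ 2 * Real.tanh x ^ 2 < -κ := by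
    have ht2' : -Real.tanh x * (2 * H) < Real.sqrt (-κ) := by
      have h' : -Real.tanh x < Real.sqrt (-κ) / (2 * H) := by linarith
      rwa [lt_div_iff₀ (by positivity)] at h'
    have h4 : (-Real.tanh x * (2 * H)) ^ 2 < Real.sqrt (-κ) ^ 2 := by
      apply pow_lt_pow_left₀ ht2' (by nlinarith) (by norm_num)
    rw [hskappa] at h4
    nlinarith [h4]
  have hP : 0 < 1 + 4 * H ^ 2 / κ * Real.tanh x ^ 2 := by
    have heq : 1 + 4 * H ^ 2 / κ * Real.tanh x ^ 2
        = (κ + 4 * H ^ 2 * Real.tanh x ^ 2) / κ := by field_simp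
    rw [heq]
    exact div_pos_of_neg_of_neg (by linarith) hκ
  have hQ : 0 < 1 - 4 * τ ^ 2 / κ * Real.tanh x ^ 2 := by
    have h1 : 0 ≤ 4 * τ ^ 2 / (-κ) * Real.tanh x ^ 2 :=
      mul_nonneg (div_nonneg (by positivity) (by linarith)) (sq_nonneg _)
    have heq : 4 * τ ^ 2 / (-κ) * Real.tanh x ^ 2
        = -(4 * τ ^ 2 / κ * Real.tanh x ^ 2) := by rw [div_neg]; ring
    linarith [heq ▸ h1]
  have hspne : Real.sqrt (1 + 4 * H ^ 2 / κ * Real.tanh x ^ 2) ≠ 0 :=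
    (Real.sqrt_pos.mpr hP).ne'
  have hsqne : Real.sqrt (1 - 4 * τ ^ 2 / κ * Real.tanh x ^ 2) ≠ 0 :=
    (Real.sqrt_pos.mpr hQ).ne'
  have hyfun : y = fun z => Real.arctan ((τ / H) *
      (Real.sqrt (1 + 4 * H ^ 2 / κ * Real.tanh z ^ 2) /
        Real.sqrt (1 - 4 * τ ^ 2 / κ * Real.tanh z ^ 2))) -
      (H / τ) * (Real.sqrt (4 * τ ^ 2 - κ) / Real.sqrt (4 * H ^ 2 + κ)) *
        Real.arctan ((Real.sqrt (4 * τ ^ 2 - κ) / Real.sqrt (4 * H ^ 2 + κ)) *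
          (Real.sqrt (1 + 4 * H ^ 2 / κ * Real.tanh z ^ 2) /
            Real.sqrt (1 - 4 * τ ^ 2 / κ * Real.tanh z ^ 2))) := by
    funext z; rw [hy z, hρ z]
  rw [hyfun]
  set t := Real.tanh x with htdef
  set sp := Real.sqrt (1 + 4 * H ^ 2 / κ * t ^ 2) with hspdef
  set sq := Real.sqrt (1 - 4 * τ ^ 2 / κ * t ^ 2) with hsqdef
  set sA := Real.sqrt (4 * τ ^ 2 - κ) with hsAdef
  set sB := Real.sqrt (4 * H ^ 2 + κ) with hsBdef
  have hsp2 : sp ^ 2 = 1 + 4 * H ^ 2 / κ * t ^ 2 := Real.sq_sqrt hP.le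
  have hsq2 : sq ^ 2 = 1 - 4 * τ ^ 2 / κ * t ^ 2 := Real.sq_sqrt hQ.le
  have hsA2 : sA ^ 2 = 4 * τ ^ 2 - κ := Real.sq_sqrt (by nlinarith)
  have hsB2 : sB ^ 2 = 4 * H ^ 2 + κ := Real.sq_sqrt hHκ.le
  have hsp2k : κ * sp ^ 2 = κ + 4 * H ^ 2 * t ^ 2 := by
    rw [hsp2]; field_simp
  have hsq2k : κ * sq ^ 2 = κ - 4 * τ ^ 2 * t ^ 2 := by
    rw [hsq2]; field_simp
  have hsBne : sB ≠ 0 := by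
    rw [hsBdef]; exact (Real.sqrt_pos.mpr hHκ).ne'
  have hsppos : 0 < sp := Real.sqrt_pos.mpr hP
  have hsqpos : 0 < sq := Real.sqrt_pos.mpr hQ
  have hdt : 0 < 1 - t ^ 2 := by nlinarith [tanh_sq_lt_one x]
  have hHτ : (0:ℝ) < H ^ 2 + τ ^ 2 := by positivity
  have hdtanh := tanh_hasDerivAt x
  have hdP := ((hdtanh.pow 2).const_mul (4 * H ^ 2 / κ)).const_add 1
  have hdQ := ((hdtanh.pow 2).const_mul (4 * τ ^ 2 / κ)).const_sub 1
  have hdsp := hdP.sqrt hP.ne'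
  have hdsq := hdQ.sqrt hQ.ne'
  have hdρ : HasDerivAt (fun z => Real.sqrt (1 + 4 * H ^ 2 / κ * Real.tanh z ^ 2) /
      Real.sqrt (1 - 4 * τ ^ 2 / κ * Real.tanh z ^ 2))
      (t * (1 - t ^ 2) * (4 * (H ^ 2 + τ ^ 2) / κ) / (sq ^ 2 * sq * sp)) x := by
    convert hdsp.div hdsq hsqne using 1
    case e'_4 => rfl
    case e'_5 => rfl
    case e'_8 => rfl
    simp only [Pi.pow_apply]
    rw [← htdef, ← hspdef, ← hsqdef]
    norm_num
    field_simp
    linear_combination (-t*H^2) * hsq2 + (-t*τ^2) * hsp2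
  have hd1 := (hdρ.const_mul (τ / H)).arctan
  have hd2 := ((hdρ.const_mul (sA / sB)).arctan).const_mul ((H / τ) * (sA / sB))
  have e1 : 1 + (τ / H * (sp / sq)) ^ 2 = (H ^ 2 + τ ^ 2) / (H ^ 2 * sq ^ 2) := by
    have hnum : H ^ 2 * sq ^ 2 + τ ^ 2 * sp ^ 2 = H ^ 2 + τ ^ 2 := by
      rw [hsp2, hsq2]; field_simp; ring
    rw [mul_pow, div_pow, div_pow, div_mul_div_comm, ← hnum]
    have hd : H ^ 2 * sq ^ 2 ≠ 0 := by positivity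
    field_simp
  have e2 : 1 + (sA / sB * (sp / sq)) ^ 2
      = (4 * (H ^ 2 + τ ^ 2) * (1 - t ^ 2)) / ((4 * H ^ 2 + κ) * sq ^ 2) := by
    have hnum : sB ^ 2 * sq ^ 2 + sA ^ 2 * sp ^ 2 = 4 * (H ^ 2 + τ ^ 2) * (1 - t ^ 2) := by
      rw [hsp2, hsq2, hsA2, hsB2]; field_simp; ring
    rw [mul_pow, div_pow, div_pow, div_mul_div_comm, ← hnum, ← hsB2]
    have hd : sB ^ 2 * sq ^ 2 ≠ 0 := by positivity
    field_simp
  convert hd1.sub hd2 using 1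
  case e'_4 => rfl
  case e'_5 => rfl
  case e'_8 => rfl
  rw [e1, e2, one_div_div, one_div_div]
  have hA : H ^ 2 * sq ^ 2 / (H ^ 2 + τ ^ 2) *
      (τ / H * (t * (1 - t ^ 2) * (4 * (H ^ 2 + τ ^ 2) / κ) / (sq ^ 2 * sq * sp)))
      = 4 * τ * H * t * (1 - t ^ 2) / (κ * sp * sq) := by
    field_simp
  have hB : H / τ * (sA / sB) *
      ((4 * H ^ 2 + κ) * sq ^ 2 / (4 * (H ^ 2 + τ ^ 2) * (1 - t ^ 2)) *
        (sA / sB * (t * (1 - t ^ 2) * (4 * (H ^ 2 + τ ^ 2) / κ) / (sq ^ 2 * sq * sp))))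
      = H * (4 * τ ^ 2 - κ) * t / (τ * κ * sp * sq) := by
    field_simp
    linear_combination ((4*H^2+κ)*t) * hsA2 - (t*(4*τ^2-κ)) * hsB2
  rw [hA, hB]
  field_simp
  linear_combination t * hsq2k
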